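/- Let 0 < a < x* and θ* ∈ (0,1). Suppose p : [a,x*] → (0,1) is continuously differentiable, satisfies p'(x) = (λ+r)·p(x)·(p(x) − 1) / ( ((λ+r) − (λ+μ)p(x))·x ) for all x ∈ [a,x*], and p(x*) = θ*. Then for every x ∈ [a,x*]: p(x) = (θ*·x*/x) · ( (1 − p(x))/(1 − θ*) )^{(r−μ)/(r+λ)}. -/

import Mathlib

open Set Filter

theorem stmt_6
    (r mu lam : ℝ) (hmu : 0 ≤ mu) (hr : mu < r) (hlam : 0 ≤ lam)
    (a xs th : ℝ) (ha : 0 < a) (hax : a < xs) (hth : th ∈ Set.Ioo (0:ℝ) 1)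
    (p : ℝ → ℝ)
    (hpr : ∀ x ∈ Set.Icc a xs, p x ∈ Set.Ioo (0:ℝ) 1)
    (hode : ∀ x ∈ Set.Icc a xs,
      HasDerivAt p ((lam + r) * p x * (p x - 1) / (((lam + r) - (lam + mu) * p x) * x)) x)
    (hpx : p xs = th) :
    ∀ x ∈ Set.Icc a xs,
      p x = (th * xs / x) * ((1 - p x) / (1 - th)) ^ ((r - mu) / (r + lam)) := by
  obtain ⟨hth0, hth1⟩ := hth
  have hrl : (0:ℝ) < r + lam := by linarith
  set c : ℝ := (r - mu) / (r + lam) with hc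
  set g : ℝ → ℝ := fun x => Real.log (p x) + Real.log x - c * Real.log (1 - p x) with hg
  have hx0 : ∀ x ∈ Set.Icc a xs, 0 < x := fun x hx => lt_of_lt_of_le ha hx.1
  have hgderiv : ∀ x ∈ Set.Icc a xs, HasDerivAt g 0 x := by
    intro x hx
    obtain ⟨hp0, hp1⟩ := hpr x hx
    have hxpos := hx0 x hx
    have hden : 0 < (lam + r) - (lam + mu) * p x := by nlinarith
    have hd := hode x hx
    set d : ℝ := (lam + r) * p x * (p x - 1) / (((lam + r) - (lam + mu) * p x) * x) with hdd
    have h1 : HasDerivAt (fun y => Real.log (p y)) (d / p x) x := hd.log hp0.ne'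
    have h2 : HasDerivAt Real.log x⁻¹ x := Real.hasDerivAt_log hxpos.ne'
    have h3 : HasDerivAt (fun y => (1:ℝ) - p y) (-d) x := hd.const_sub 1
    have h1p : (0:ℝ) < 1 - p x := by linarith
    have h4 : HasDerivAt (fun y => Real.log (1 - p y)) (-d / (1 - p x)) x :=
      h3.log h1p.ne'
    have h5 : HasDerivAt g (d / p x + x⁻¹ - c * (-d / (1 - p x))) x :=
      (h1.add h2).sub (h4.const_mul c)
    have hzero : d / p x + x⁻¹ - c * (-d / (1 - p x)) = 0 := by
      rw [hdd, hc]
      field_simp [hden.ne', hp0.ne', h1p.ne', hxpos.ne', hrl.ne',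
        (show (lam + r) - p x * (lam + mu) ≠ 0 by rw [mul_comm]; exact hden.ne')]
      ring
    rwa [hzero] at h5
  have hconst : ∀ x ∈ Set.Icc a xs, g x = g a :=
    constant_of_has_deriv_right_zero
      (fun x hx => (hgderiv x hx).continuousAt.continuousWithinAt)
      (fun x hx => ((hgderiv x (Set.Ico_subset_Icc_self hx)).hasDerivWithinAt))
  have hxs : xs ∈ Set.Icc a xs := ⟨le_of_lt hax, le_refl xs⟩
  intro x hx
  obtain ⟨hp0, hp1⟩ := hpr x hx
  have hxpos := hx0 x hx
  have h1p : (0:ℝ) < 1 - p x := by linarith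
  have h1t : (0:ℝ) < 1 - th := by linarith
  have hgx : g x = g xs := by rw [hconst x hx, hconst xs hxs]
  have hgx' : Real.log (p x) + Real.log x - c * Real.log (1 - p x)
      = Real.log th + Real.log xs - c * Real.log (1 - th) := by
    simpa [hg, hpx] using hgx
  have hxspos : 0 < xs := lt_trans ha hax
  have hrhs : 0 < (th * xs / x) * ((1 - p x) / (1 - th)) ^ c := by
    positivity
  have hlogrhs : Real.log ((th * xs / x) * ((1 - p x) / (1 - th)) ^ c)
      = Real.log th + Real.log xs - Real.log x + c * (Real.log (1 - p x) - Real.log (1 - th)) := by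
    rw [Real.log_mul (by positivity) (by positivity),
      Real.log_div (by positivity) hxpos.ne', Real.log_mul hth0.ne' hxspos.ne',
      Real.log_rpow (by positivity), Real.log_div h1p.ne' h1t.ne']

  have : Real.log (p x) = Real.log ((th * xs / x) * ((1 - p x) / (1 - th)) ^ c) := by
    rw [hlogrhs]; linarith
  have := congrArg Real.exp this
  rwa [Real.exp_log hp0, Real.exp_log hrhs] at this
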